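/- (Lemma 4) There exists a unique h† > 0 satisfying the fixed-point equation h† = −(180·b·L)/(π·ξ_L) · [1 − 1/(1 + a·exp(−b·((180/π)·arctan(h†/L) − a)))], and this h† is the unique global maximizer over h ∈ (0, ∞) of the function h ↦ (L² + h²)^{ξ_L/2} / (1 + a·exp(−b·((180/π)·arctan(h/L) − a))); in particular the maximizer is independent of any positive multiplicative constant (such as the transmit power P divided by the noise power σ_b²). -/

import Mathlib

/-- LoS probability for a UAV at height `h` directly above a point at horizontal
distance `L` from the receiver (the case `θ_w = 90°`). -/
noncomputable def pB (a b L h : ℝ) : ℝ :=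
  1 / (1 + a * Real.exp (-b * ((180 / Real.pi) * Real.arctan (h / L) - a)))

/-- The objective `h ↦ (L² + h²)^{ξ_L/2} · p_B(h)` (the effective SNR at Bob up to the
positive multiplicative constant `P/σ_b²`). -/
noncomputable def gV (a b L ξL h : ℝ) : ℝ :=
  (L ^ 2 + h ^ 2) ^ (ξL / 2) * pB a b L h

lemma denom_pos (a b L h : ℝ) (ha : 0 < a) :
    0 < 1 + a * Real.exp (-b * ((180 / Real.pi) * Real.arctan (h / L) - a)) := by
  positivity

lemma pB_pos (a b L h : ℝ) (ha : 0 < a) : 0 < pB a b L h :=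
  one_div_pos.mpr (denom_pos a b L h ha)

lemma pB_lt_one (a b L h : ℝ) (ha : 0 < a) : pB a b L h < 1 := by
  rw [pB, div_lt_one (denom_pos a b L h ha)]
  nlinarith [Real.exp_pos (-b * ((180 / Real.pi) * Real.arctan (h / L) - a))]

lemma pB_strictMono (a b L : ℝ) (ha : 0 < a) (hb : 0 < b) (hL : 0 < L) :
    StrictMono (pB a b L) := by
  intro x y hxy
  have hπ : (0:ℝ) < 180 / Real.pi := by positivity
  have harc : Real.arctan (x / L) < Real.arctan (y / L) :=
    Real.arctan_strictMono (div_lt_div_of_pos_right hxy hL)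
  have hexp : Real.exp (-b * ((180 / Real.pi) * Real.arctan (y / L) - a)) <
      Real.exp (-b * ((180 / Real.pi) * Real.arctan (x / L) - a)) := by
    apply Real.exp_lt_exp.mpr
    have := mul_lt_mul_of_pos_left harc hπ
    nlinarith
  have h1 := denom_pos a b L x ha
  have h2 := denom_pos a b L y ha
  rw [pB, pB]
  apply one_div_lt_one_div_of_lt h2
  nlinarith

lemma hasDerivAt_pB (a b L : ℝ) (ha : 0 < a) (hL : 0 < L) (x : ℝ) :
    HasDerivAt (pB a b L)
      (pB a b L x * (1 - pB a b L x) * (b * (180 / Real.pi) * L / (L ^ 2 + x ^ 2))) x := by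
  have hπ : Real.pi ≠ 0 := Real.pi_ne_zero
  have hq : (0:ℝ) < L ^ 2 + x ^ 2 := by positivity
  have h1 : HasDerivAt (fun h : ℝ => h / L) (1 / L) x := (hasDerivAt_id x).div_const L
  have h2 : HasDerivAt (fun h : ℝ => Real.arctan (h / L))
      ((1 / (1 + (x / L) ^ 2)) * (1 / L)) x :=
    by have := (Real.hasDerivAt_arctan (x / L)).comp x h1; exact this
  have h3 : HasDerivAt (fun h : ℝ => -b * ((180 / Real.pi) * Real.arctan (h / L) - a))
      (-b * ((180 / Real.pi) * ((1 / (1 + (x / L) ^ 2)) * (1 / L)))) x :=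
    ((h2.const_mul (180 / Real.pi)).sub_const a).const_mul (-b)
  have h5 : HasDerivAt
      (fun h : ℝ => 1 + a * Real.exp (-b * ((180 / Real.pi) * Real.arctan (h / L) - a)))
      (a * (Real.exp (-b * ((180 / Real.pi) * Real.arctan (x / L) - a)) *
        (-b * ((180 / Real.pi) * ((1 / (1 + (x / L) ^ 2)) * (1 / L)))))) x :=
    (h3.exp.const_mul a).const_add 1
  have h6 := h5.inv (ne_of_gt (denom_pos a b L x ha))
  have heq : (fun h : ℝ =>
      (1 + a * Real.exp (-b * ((180 / Real.pi) * Real.arctan (h / L) - a))))⁻¹ = pB a b L := by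
    funext h; rw [Pi.inv_apply, pB, one_div]
  rw [heq] at h6
  refine h6.congr_deriv (Eq.symm ?_)
  rw [pB]
  have hD := denom_pos a b L x ha
  have hE := Real.exp_pos (-b * ((180 / Real.pi) * Real.arctan (x / L) - a))
  have h1x : (0:ℝ) < 1 + (x / L) ^ 2 := by positivity
  field_simp
  ring

lemma hasDerivAt_gV (a b L ξL : ℝ) (ha : 0 < a) (hL : 0 < L) (x : ℝ) :
    HasDerivAt (gV a b L ξL)
      ((L ^ 2 + x ^ 2) ^ (ξL / 2 - 1) * pB a b L x *
        (ξL * x + 180 * b * L / Real.pi * (1 - pB a b L x))) x := by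
  have hq : (0:ℝ) < L ^ 2 + x ^ 2 := by positivity
  have hqD : HasDerivAt (fun h : ℝ => L ^ 2 + h ^ 2) (2 * x) x := by
    simpa using ((hasDerivAt_pow 2 x).const_add (L ^ 2))
  have hr : HasDerivAt (fun h : ℝ => (L ^ 2 + h ^ 2) ^ (ξL / 2))
      (2 * x * (ξL / 2) * (L ^ 2 + x ^ 2) ^ (ξL / 2 - 1)) x :=
    hqD.rpow_const (Or.inl (ne_of_gt hq))
  have h := hr.mul (hasDerivAt_pB a b L ha hL x)
  refine h.congr_deriv (Eq.symm ?_)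
  have hrw : (L ^ 2 + x ^ 2) ^ (ξL / 2) =
      (L ^ 2 + x ^ 2) ^ (ξL / 2 - 1) * (L ^ 2 + x ^ 2) := by
    rw [← Real.rpow_add_one (ne_of_gt hq)]; ring_nf
  rw [hrw]
  have hπ : Real.pi ≠ 0 := Real.pi_ne_zero
  field_simp

lemma N_strictAnti (a b L ξL : ℝ) (ha : 0 < a) (hb : 0 < b) (hL : 0 < L) (hξ : ξL < 0) :
    StrictAnti (fun h : ℝ => ξL * h + 180 * b * L / Real.pi * (1 - pB a b L h)) := by
  intro x y hxy
  have hp := pB_strictMono a b L ha hb hL hxy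
  have hC : (0:ℝ) < 180 * b * L / Real.pi := by
    have := Real.pi_pos; positivity
  nlinarith

lemma fp_iff (a b L ξL : ℝ) (hξ : ξL < 0) (h : ℝ) :
    h = -(180 * b * L) / (Real.pi * ξL) * (1 - pB a b L h) ↔
      ξL * h + 180 * b * L / Real.pi * (1 - pB a b L h) = 0 := by
  have hπ : Real.pi ≠ 0 := Real.pi_ne_zero
  have hξ' : ξL ≠ 0 := ne_of_lt hξ
  rw [div_mul_eq_mul_div, eq_div_iff (mul_ne_zero hπ hξ')]
  constructor
  · intro hh
    field_simp
    nlinarith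
  · intro hh
    field_simp at hh
    nlinarith

lemma continuous_pB (a b L : ℝ) (ha : 0 < a) (hL : 0 < L) : Continuous (pB a b L) :=
  continuous_iff_continuousAt.mpr fun x => (hasDerivAt_pB a b L ha hL x).continuousAt

lemma continuous_gV (a b L ξL : ℝ) (ha : 0 < a) (hL : 0 < L) : Continuous (gV a b L ξL) :=
  continuous_iff_continuousAt.mpr fun x => (hasDerivAt_gV a b L ξL ha hL x).continuousAt

/-- Lemma 4: there is a unique `h† > 0` satisfying the fixed-point equation
`h† = −(180·b·L)/(π·ξ_L)·(1 − p_B(h†))`, and this `h†` is the unique global maximizer of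
`h ↦ (L² + h²)^{ξ_L/2}·p_B(h)` over `(0, ∞)`; in particular it also maximizes
`c·(L² + h²)^{ξ_L/2}·p_B(h)` for every constant `c > 0` (such as `c = P/σ_b²`). -/
theorem stmt_14 (a b L ξL : ℝ) (ha : 0 < a) (hb : 0 < b) (hL : 0 < L) (hξ : ξL < 0) :
    ∃ h0 : ℝ, 0 < h0 ∧
      h0 = -(180 * b * L) / (Real.pi * ξL) * (1 - pB a b L h0) ∧
      (∀ h : ℝ, 0 < h →
        h = -(180 * b * L) / (Real.pi * ξL) * (1 - pB a b L h) → h = h0) ∧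
      (∀ h : ℝ, 0 < h → h ≠ h0 → gV a b L ξL h < gV a b L ξL h0) ∧
      (∀ c : ℝ, 0 < c → ∀ h : ℝ, 0 < h → h ≠ h0 →
        c * gV a b L ξL h < c * gV a b L ξL h0) := by
  have hπ : (0:ℝ) < Real.pi := Real.pi_pos
  set K : ℝ := -(180 * b * L) / (Real.pi * ξL) with hKdef
  have hK : 0 < K := by
    apply div_pos_of_neg_of_neg
    · nlinarith
    · exact mul_neg_of_pos_of_neg hπ hξ
  -- existence of the fixed point via IVT
  set G : ℝ → ℝ := fun h => K * (1 - pB a b L h) - h with hGdef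
  have hGcont : Continuous G :=
    (continuous_const.mul (continuous_const.sub (continuous_pB a b L ha hL))).sub continuous_id
  have hG0 : 0 < G 0 := by
    have := pB_lt_one a b L 0 ha
    have : 0 < 1 - pB a b L 0 := by linarith
    simpa [hGdef] using mul_pos hK this
  have hGK : G K ≤ 0 := by
    have h1 := pB_pos a b L K ha
    have : K * (1 - pB a b L K) - K = -(K * pB a b L K) := by ring
    rw [hGdef]; simp only []
    nlinarith
  obtain ⟨h0, hh0mem, hGh0⟩ := intermediate_value_Icc' (le_of_lt hK) hGcont.continuousOn
    (Set.mem_Icc.mpr ⟨hGK, le_of_lt hG0⟩)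
  have hfix : h0 = K * (1 - pB a b L h0) := by
    have : K * (1 - pB a b L h0) - h0 = 0 := hGh0
    linarith
  have hh0pos : 0 < h0 := by
    have h1 := pB_lt_one a b L h0 ha
    rw [hfix]; apply mul_pos hK; linarith
  -- N and its zero at h0
  set N : ℝ → ℝ := fun h => ξL * h + 180 * b * L / Real.pi * (1 - pB a b L h) with hNdef
  have hNanti := N_strictAnti a b L ξL ha hb hL hξ
  have hNh0 : N h0 = 0 := (fp_iff a b L ξL hξ h0).mp hfix
  -- strict mono / anti of gV
  have hderiv : ∀ x : ℝ, deriv (gV a b L ξL) x =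
      (L ^ 2 + x ^ 2) ^ (ξL / 2 - 1) * pB a b L x * N x := fun x =>
    (hasDerivAt_gV a b L ξL ha hL x).deriv
  have hmono : StrictMonoOn (gV a b L ξL) (Set.Icc 0 h0) := by
    apply strictMonoOn_of_deriv_pos (convex_Icc 0 h0)
      (continuous_gV a b L ξL ha hL).continuousOn
    intro x hx
    rw [interior_Icc] at hx
    rw [hderiv x]
    have hNx : 0 < N x := hNh0 ▸ hNanti hx.2
    have h1 : (0:ℝ) < (L ^ 2 + x ^ 2) ^ (ξL / 2 - 1) :=
      Real.rpow_pos_of_pos (by positivity) _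
    exact mul_pos (mul_pos h1 (pB_pos a b L x ha)) hNx
  have hanti : StrictAntiOn (gV a b L ξL) (Set.Ici h0) := by
    apply strictAntiOn_of_deriv_neg (convex_Ici h0)
      (continuous_gV a b L ξL ha hL).continuousOn
    intro x hx
    rw [interior_Ici] at hx
    rw [hderiv x]
    have hNx : N x < 0 := hNh0 ▸ hNanti hx
    have h1 : (0:ℝ) < (L ^ 2 + x ^ 2) ^ (ξL / 2 - 1) :=
      Real.rpow_pos_of_pos (by positivity) _
    exact mul_neg_of_pos_of_neg (mul_pos h1 (pB_pos a b L x ha)) hNx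
  have hmax : ∀ h : ℝ, 0 < h → h ≠ h0 → gV a b L ξL h < gV a b L ξL h0 := by
    intro h hh hne
    rcases lt_or_gt_of_ne hne with hlt | hgt
    · exact hmono ⟨le_of_lt hh, le_of_lt hlt⟩ ⟨le_of_lt hh0pos, le_refl _⟩ hlt
    · exact hanti (le_refl h0) (le_of_lt hgt) hgt
  refine ⟨h0, hh0pos, hfix, ?_, hmax, fun c hc h hh hne =>
    mul_lt_mul_of_pos_left (hmax h hh hne) hc⟩
  intro h _ hfp
  exact hNanti.injective (((fp_iff a b L ξL hξ h).mp hfp).trans hNh0.symm)
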